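/- For ρ ∈ (-1,0), ∫₀^∞ t² e^{-t²/2} Φ(ρt/√(1-ρ²)) dt = −(1/√(2π))·(arctan(√(1-ρ²)/ρ) − ρ√(1-ρ²)). -/

import Mathlib

open MeasureTheory Real Filter Set Topology

noncomputable def Phi (x : ℝ) : ℝ :=
  ∫ s in Set.Iic x, (1 / Real.sqrt (2 * Real.pi)) * Real.exp (-s ^ 2 / 2)

noncomputable def stdPdf (x : ℝ) : ℝ := (1 / Real.sqrt (2 * Real.pi)) * Real.exp (-x ^ 2 / 2)

noncomputable def phi2 (ρ x y : ℝ) : ℝ :=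
  (1 / (2 * Real.pi * Real.sqrt (1 - ρ ^ 2))) *
    Real.exp (-(x ^ 2 - 2 * ρ * x * y + y ^ 2) / (2 * (1 - ρ ^ 2)))

noncomputable def sg (x : ℝ) : ℝ := if 0 ≤ x then 1 else -1

/-! ### Auxiliary lemmas -/

lemma sqrt2pi_pos : (0 : ℝ) < Real.sqrt (2 * π) := Real.sqrt_pos.2 (by positivity)

lemma sqrt2pi_sq : Real.sqrt (2 * π) * Real.sqrt (2 * π) = 2 * π :=
  Real.mul_self_sqrt (by positivity)

lemma stdPdf_pos (x : ℝ) : 0 < stdPdf x := by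
  unfold stdPdf; positivity

lemma stdPdf_le (x : ℝ) : stdPdf x ≤ 1 / Real.sqrt (2 * π) := by
  unfold stdPdf
  have h1 : Real.exp (-x ^ 2 / 2) ≤ 1 := by
    rw [Real.exp_le_one_iff]; nlinarith [sq_nonneg x]
  nlinarith [sqrt2pi_pos, one_div_pos.2 sqrt2pi_pos]

lemma continuous_stdPdf : Continuous stdPdf := by
  unfold stdPdf; fun_prop

lemma exp_half_eq (s : ℝ) : Real.exp (-s ^ 2 / 2) = Real.exp (-(1/2 : ℝ) * s ^ 2) := by
  congr 1; ring

lemma integrable_exp_half : Integrable (fun s : ℝ => Real.exp (-s ^ 2 / 2)) := by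
  have h := integrable_exp_neg_mul_sq (b := (1/2 : ℝ)) (by norm_num)
  exact h.congr (Filter.Eventually.of_forall fun s => (exp_half_eq s).symm)

lemma integrable_stdPdf : Integrable stdPdf :=
  (integrable_exp_half.const_mul _)

lemma integral_exp_half_Ioi : ∫ s in Ioi (0:ℝ), Real.exp (-s ^ 2 / 2) = Real.sqrt (2 * π) / 2 := by
  have h := integral_gaussian_Ioi (1/2 : ℝ)
  rw [show √(π / (1/2 : ℝ)) = √(2 * π) by norm_num [mul_comm]] at h
  rw [← h]
  exact setIntegral_congr_fun measurableSet_Ioi fun s _ => exp_half_eq s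

lemma Phi_eq (x : ℝ) : Phi x = ∫ s in Set.Iic x, stdPdf s := rfl

lemma Phi_nonneg (x : ℝ) : 0 ≤ Phi x := by
  rw [Phi_eq]
  exact setIntegral_nonneg measurableSet_Iic fun s _ => (stdPdf_pos s).le

lemma Phi_le_one (x : ℝ) : Phi x ≤ 1 := by
  rw [Phi_eq]
  have h1 : ∫ s in Set.Iic x, stdPdf s ≤ ∫ s, stdPdf s :=
    setIntegral_le_integral integrable_stdPdf
      (Filter.Eventually.of_forall fun s => (stdPdf_pos s).le)
  have h2 : ∫ s, stdPdf s = 1 := by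
    unfold stdPdf
    rw [integral_const_mul]
    have : ∫ s : ℝ, Real.exp (-s ^ 2 / 2) = Real.sqrt (2 * π) := by
      have h := integral_gaussian (1/2 : ℝ)
      rw [show √(π / (1/2 : ℝ)) = √(2 * π) by norm_num [mul_comm]] at h
      rw [← h]
      exact integral_congr_ae (Filter.Eventually.of_forall fun s => exp_half_eq s)
    rw [this]
    field_simp
  linarith

lemma abs_Phi_le_one (x : ℝ) : |Phi x| ≤ 1 :=
  abs_le.2 ⟨by linarith [Phi_nonneg x], Phi_le_one x⟩

lemma Phi_zero : Phi 0 = 1/2 := by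
  rw [Phi_eq]
  unfold stdPdf
  rw [integral_const_mul]
  have h1 : ∫ s in Set.Iic (0:ℝ), Real.exp (-s ^ 2 / 2)
      = ∫ s in Set.Ioi (-(0:ℝ)), Real.exp (-s ^ 2 / 2) := by
    rw [← integral_comp_neg_Iic (c := (0:ℝ)) (fun s => Real.exp (-s ^ 2 / 2))]
    refine setIntegral_congr_fun measurableSet_Iic fun s _ => ?_
    rw [neg_pow]
    norm_num
  rw [h1, neg_zero, integral_exp_half_Ioi]
  have h2 := sqrt2pi_sq
  have h3 := sqrt2pi_pos
  field_simp

lemma hasDerivAt_Phi (x : ℝ) : HasDerivAt Phi (stdPdf x) x := by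
  have key : ∀ y : ℝ, Phi y = Phi 0 + ∫ t in (0:ℝ)..y, stdPdf t := by
    intro y
    rw [Phi_eq, Phi_eq]
    have := intervalIntegral.integral_Iic_sub_Iic (f := stdPdf) (μ := volume)
      integrable_stdPdf.integrableOn integrable_stdPdf.integrableOn (a := 0) (b := y)
    linarith
  have hd : HasDerivAt (fun y => Phi 0 + ∫ t in (0:ℝ)..y, stdPdf t) (stdPdf x) x := by
    refine HasDerivAt.const_add _ ?_
    exact intervalIntegral.integral_hasDerivAt_right
      integrable_stdPdf.intervalIntegrable
      (continuous_stdPdf.stronglyMeasurableAtFilter _ _)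
      continuous_stdPdf.continuousAt
  exact hd.congr_of_eventuallyEq (Filter.Eventually.of_forall key)

lemma continuous_Phi : Continuous Phi :=
  continuous_iff_continuousAt.2 fun x => (hasDerivAt_Phi x).continuousAt

lemma tendsto_pow_mul_exp (n : ℕ) {b : ℝ} (hb : 0 < b) :
    Tendsto (fun t : ℝ => t ^ n * Real.exp (-b * t ^ 2)) atTop (𝓝 0) := by
  have h := rpow_mul_exp_neg_mul_sq_isLittleO_exp_neg hb (n : ℝ)
  have h2 : Tendsto (fun x : ℝ => Real.exp (-(1/2 : ℝ) * x)) atTop (𝓝 0) := by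
    apply Real.tendsto_exp_atBot.comp
    exact (tendsto_const_mul_atBot_of_neg (by norm_num)).2 tendsto_id
  have h3 := h.trans_tendsto h2
  refine h3.congr' ?_
  filter_upwards [eventually_ge_atTop (0:ℝ)] with t ht
  rw [Real.rpow_natCast]

lemma integrableOn_pow_exp (n : ℕ) {b : ℝ} (hb : 0 < b) :
    IntegrableOn (fun t : ℝ => t ^ n * Real.exp (-b * t ^ 2)) (Ioi 0) := by
  have h := integrableOn_rpow_mul_exp_neg_mul_sq hb (s := (n : ℝ))
    (by exact_mod_cast lt_of_lt_of_le neg_one_lt_zero (Nat.cast_nonneg n))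
  exact h.congr_fun (fun t _ => by simp only [Real.rpow_natCast]) measurableSet_Ioi

lemma int_cube {b : ℝ} (hb : 0 < b) :
    ∫ t in Ioi (0:ℝ), t ^ 3 * Real.exp (-b * t ^ 2) = 1 / (2 * b ^ 2) := by
  have hderiv : ∀ t ∈ Ici (0:ℝ),
      HasDerivAt (fun t : ℝ => -(t ^ 2 / (2*b) + 1 / (2*b^2)) * Real.exp (-b * t ^ 2))
        (t ^ 3 * Real.exp (-b * t ^ 2)) t := by
    intro t _
    have h1 : HasDerivAt (fun t : ℝ => -(t ^ 2 / (2*b) + 1 / (2*b^2)))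
        (-(2 * t / (2*b))) t := by
      have := ((hasDerivAt_pow 2 t).div_const (2*b)).add_const (1/(2*b^2))
      refine this.neg.congr_deriv ?_
      norm_num
    have h2 : HasDerivAt (fun t : ℝ => Real.exp (-b * t ^ 2))
        (Real.exp (-b * t ^ 2) * (-b * (2 * t))) t := by
      have := ((hasDerivAt_pow 2 t).const_mul (-b)).exp
      simpa using this
    have := h1.mul h2
    refine this.congr_deriv ?_
    field_simp
    ring
  have htend : Tendsto (fun t : ℝ => -(t ^ 2 / (2*b) + 1 / (2*b^2)) * Real.exp (-b * t ^ 2))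
      atTop (𝓝 0) := by
    have e2 := tendsto_pow_mul_exp 2 hb
    have e0 := tendsto_pow_mul_exp 0 hb
    have := ((e2.const_mul (-(1/(2*b)))).add (e0.const_mul (-(1/(2*b^2)))))
    simp only [mul_zero, add_zero] at this
    refine this.congr fun t => ?_
    simp only [pow_zero, one_mul]
    ring
  have := MeasureTheory.integral_Ioi_of_hasDerivAt_of_tendsto' hderiv
    (integrableOn_pow_exp 3 hb) htend
  rw [this]
  norm_num

lemma int_sq : ∫ t in Ioi (0:ℝ), t ^ 2 * Real.exp (-t ^ 2 / 2) = Real.sqrt (2 * π) / 2 := by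
  have hb : (0:ℝ) < 1/2 := by norm_num
  have hderiv : ∀ t ∈ Ici (0:ℝ),
      HasDerivAt (fun t : ℝ => -t * Real.exp (-(1/2:ℝ) * t ^ 2))
        ((t ^ 2 - 1) * Real.exp (-(1/2:ℝ) * t ^ 2)) t := by
    intro t _
    have h1 : HasDerivAt (fun t : ℝ => -t) (-1) t := (hasDerivAt_id t).neg
    have h2 : HasDerivAt (fun t : ℝ => Real.exp (-(1/2:ℝ) * t ^ 2))
        (Real.exp (-(1/2:ℝ) * t ^ 2) * (-(1/2:ℝ) * (2 * t))) t := by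
      have := ((hasDerivAt_pow 2 t).const_mul (-(1/2:ℝ))).exp
      simpa using this
    have := h1.mul h2
    refine this.congr_deriv ?_
    ring
  have hint : IntegrableOn (fun t : ℝ => (t ^ 2 - 1) * Real.exp (-(1/2:ℝ) * t ^ 2)) (Ioi 0) := by
    have h2 := integrableOn_pow_exp 2 hb
    have h0 := integrableOn_pow_exp 0 hb
    have hsub : IntegrableOn
        (fun t : ℝ => t ^ 2 * Real.exp (-(1/2:ℝ) * t ^ 2) - t ^ 0 * Real.exp (-(1/2:ℝ) * t ^ 2))
        (Ioi 0) := h2.sub h0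
    refine hsub.congr_fun (fun t _ => ?_) measurableSet_Ioi
    simp only [pow_zero, one_mul]
    ring
  have htend : Tendsto (fun t : ℝ => -t * Real.exp (-(1/2:ℝ) * t ^ 2)) atTop (𝓝 0) := by
    have e1 := tendsto_pow_mul_exp 1 hb
    have := e1.neg
    simp only [neg_zero] at this
    refine this.congr fun t => ?_
    ring
  have key := MeasureTheory.integral_Ioi_of_hasDerivAt_of_tendsto' hderiv hint htend
  have hsplit : ∫ t in Ioi (0:ℝ), (t ^ 2 - 1) * Real.exp (-(1/2:ℝ) * t ^ 2)
      = (∫ t in Ioi (0:ℝ), t ^ 2 * Real.exp (-t ^ 2 / 2))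
        - ∫ t in Ioi (0:ℝ), Real.exp (-t ^ 2 / 2) := by
    rw [← integral_sub]
    · refine setIntegral_congr_fun measurableSet_Ioi fun t _ => ?_
      rw [exp_half_eq]
      ring
    · exact (integrableOn_pow_exp 2 hb).congr_fun
        (fun t _ => by rw [exp_half_eq]) measurableSet_Ioi
    · exact integrable_exp_half.integrableOn
  rw [hsplit, integral_exp_half_Ioi] at key
  have h0 : (0:ℝ) - (-(0:ℝ) * Real.exp (-(1/2:ℝ) * (0:ℝ) ^ 2)) = 0 := by norm_num
  linarith

noncomputable def Ifun (a : ℝ) : ℝ :=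
  ∫ t in Ioi (0:ℝ), t ^ 2 * Real.exp (-t ^ 2 / 2) * Phi (a * t)

lemma integrable_F (x : ℝ) :
    Integrable (fun t => t ^ 2 * Real.exp (-t ^ 2 / 2) * Phi (x * t))
      (volume.restrict (Ioi 0)) := by
  have hbound : IntegrableOn (fun t : ℝ => t ^ 2 * Real.exp (-(1/2:ℝ) * t ^ 2)) (Ioi 0) :=
    integrableOn_pow_exp 2 (by norm_num)
  refine Integrable.mono' hbound ?_ ?_
  · exact ((continuous_pow 2).mul (by fun_prop)).mul
      (continuous_Phi.comp (by fun_prop)) |>.aestronglyMeasurable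
  · refine Filter.Eventually.of_forall fun t => ?_
    rw [Real.norm_eq_abs, abs_mul, abs_mul]
    have h1 : |t ^ 2| = t ^ 2 := abs_of_nonneg (sq_nonneg t)
    have h2 : |Real.exp (-t ^ 2 / 2)| = Real.exp (-(1/2:ℝ) * t ^ 2) := by
      rw [abs_of_pos (Real.exp_pos _), exp_half_eq]
    rw [h1, h2]
    exact mul_le_of_le_one_right (by positivity) (abs_Phi_le_one (x * t))

lemma hasDerivAt_Ifun (a : ℝ) :
    HasDerivAt Ifun ((2 / (1 + a ^ 2) ^ 2) / Real.sqrt (2 * π)) a := by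
  have hb2 : (0:ℝ) < 1/2 := by norm_num
  have hbound : ∀ᵐ t ∂(volume.restrict (Ioi (0:ℝ))), ∀ x ∈ Metric.ball a 1,
      ‖t ^ 3 * Real.exp (-t ^ 2 / 2) * stdPdf (x * t)‖
        ≤ (1 / Real.sqrt (2 * π)) * (|t| ^ 3 * Real.exp (-(1/2:ℝ) * t ^ 2)) := by
    refine Filter.Eventually.of_forall fun t x _ => ?_
    rw [Real.norm_eq_abs, abs_mul, abs_mul]
    have h1 : |t ^ 3| = |t| ^ 3 := abs_pow t 3
    have h2 : |Real.exp (-t ^ 2 / 2)| = Real.exp (-(1/2:ℝ) * t ^ 2) := by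
      rw [abs_of_pos (Real.exp_pos _), exp_half_eq]
    have h3 : |stdPdf (x * t)| ≤ 1 / Real.sqrt (2 * π) := by
      rw [abs_of_pos (stdPdf_pos _)]; exact stdPdf_le _
    rw [h1, h2]
    calc |t| ^ 3 * Real.exp (-(1/2:ℝ) * t ^ 2) * |stdPdf (x * t)|
        ≤ |t| ^ 3 * Real.exp (-(1/2:ℝ) * t ^ 2) * (1 / Real.sqrt (2 * π)) := by
          gcongr
      _ = (1 / Real.sqrt (2 * π)) * (|t| ^ 3 * Real.exp (-(1/2:ℝ) * t ^ 2)) := by ring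
  have hbint : Integrable
      (fun t => (1 / Real.sqrt (2 * π)) * (|t| ^ 3 * Real.exp (-(1/2:ℝ) * t ^ 2)))
      (volume.restrict (Ioi (0:ℝ))) := by
    have h : IntegrableOn (fun t : ℝ => (1 / Real.sqrt (2 * π)) * (t ^ 3 * Real.exp (-(1/2:ℝ) * t ^ 2)))
        (Ioi 0) := (integrableOn_pow_exp 3 hb2).const_mul (1 / Real.sqrt (2 * π))
    refine h.congr_fun (fun t ht => ?_) measurableSet_Ioi
    rw [abs_of_pos (mem_Ioi.1 ht)]
  have hdiff : ∀ᵐ t ∂(volume.restrict (Ioi (0:ℝ))), ∀ x ∈ Metric.ball a 1,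
      HasDerivAt (fun x => t ^ 2 * Real.exp (-t ^ 2 / 2) * Phi (x * t))
        (t ^ 3 * Real.exp (-t ^ 2 / 2) * stdPdf (x * t)) x := by
    refine Filter.Eventually.of_forall fun t x _ => ?_
    have hPhi : HasDerivAt (fun x : ℝ => Phi (x * t)) (stdPdf (x * t) * t) x :=
      by have := (hasDerivAt_Phi (x * t)).comp x (hasDerivAt_mul_const t); exact this
    have := hPhi.const_mul (t ^ 2 * Real.exp (-t ^ 2 / 2))
    refine this.congr_deriv ?_
    ring
  obtain ⟨-, h⟩ := hasDerivAt_integral_of_dominated_loc_of_deriv_le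
    (μ := volume.restrict (Ioi 0))
    (F := fun x t => t ^ 2 * Real.exp (-t ^ 2 / 2) * Phi (x * t))
    (F' := fun x t => t ^ 3 * Real.exp (-t ^ 2 / 2) * stdPdf (x * t))
    (x₀ := a) (s := Metric.ball a 1)
    (bound := fun t => (1 / Real.sqrt (2 * π)) * (|t| ^ 3 * Real.exp (-(1/2:ℝ) * t ^ 2)))
    (Metric.ball_mem_nhds a one_pos)
    (Filter.Eventually.of_forall fun x => (integrable_F x).aestronglyMeasurable)
    (integrable_F a)
    (((continuous_pow 3).mul (by fun_prop)).mul
      (continuous_stdPdf.comp (by fun_prop)) |>.aestronglyMeasurable)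
    hbound hbint hdiff
  refine h.congr_deriv (Eq.symm ?_)
  have hb : (0:ℝ) < (1 + a ^ 2) / 2 := by positivity
  have heq : ∀ t : ℝ, t ^ 3 * Real.exp (-t ^ 2 / 2) * stdPdf (a * t)
      = (1 / Real.sqrt (2 * π)) * (t ^ 3 * Real.exp (-((1 + a ^ 2) / 2) * t ^ 2)) := by
    intro t
    have e : Real.exp (-t ^ 2 / 2) * Real.exp (-(a * t) ^ 2 / 2)
        = Real.exp (-((1 + a ^ 2) / 2) * t ^ 2) := by
      rw [← Real.exp_add]; congr 1; ring
    unfold stdPdf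
    calc t ^ 3 * Real.exp (-t ^ 2 / 2) * (1 / Real.sqrt (2 * π) * Real.exp (-(a * t) ^ 2 / 2))
        = 1 / Real.sqrt (2 * π)
          * (t ^ 3 * (Real.exp (-t ^ 2 / 2) * Real.exp (-(a * t) ^ 2 / 2))) := by ring
      _ = 1 / Real.sqrt (2 * π) * (t ^ 3 * Real.exp (-((1 + a ^ 2) / 2) * t ^ 2)) := by rw [e]
  calc (2 / (1 + a ^ 2) ^ 2) / Real.sqrt (2 * π)
      = (1 / Real.sqrt (2 * π)) * (1 / (2 * ((1 + a ^ 2) / 2) ^ 2)) := by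
        have hne : ((1:ℝ) + a ^ 2) ≠ 0 := by positivity
        field_simp
    _ = (1 / Real.sqrt (2 * π)) * ∫ t in Ioi (0:ℝ), t ^ 3 * Real.exp (-((1 + a ^ 2) / 2) * t ^ 2) := by
        rw [int_cube hb]
    _ = ∫ t in Ioi (0:ℝ), (1 / Real.sqrt (2 * π)) * (t ^ 3 * Real.exp (-((1 + a ^ 2) / 2) * t ^ 2)) := by
        rw [← integral_const_mul]
    _ = ∫ t in Ioi (0:ℝ), t ^ 3 * Real.exp (-t ^ 2 / 2) * stdPdf (a * t) :=
        (setIntegral_congr_fun measurableSet_Ioi fun t _ => heq t).symm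

lemma Ifun_eq (a : ℝ) :
    Ifun a = Real.sqrt (2 * π) / 4 + (Real.arctan a + a / (1 + a ^ 2)) / Real.sqrt (2 * π) := by
  set G : ℝ → ℝ :=
    fun u => Real.sqrt (2 * π) / 4 + (Real.arctan u + u / (1 + u ^ 2)) / Real.sqrt (2 * π)
    with hGdef
  have hG : ∀ u : ℝ, HasDerivAt G ((2 / (1 + u ^ 2) ^ 2) / Real.sqrt (2 * π)) u := by
    intro u
    have hden : (1 + u ^ 2) ≠ 0 := by positivity
    have h1 : HasDerivAt (fun u : ℝ => u / (1 + u ^ 2))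
        ((1 * (1 + u ^ 2) - u * (2 * u)) / (1 + u ^ 2) ^ 2) u := by
      have ha : HasDerivAt (fun u : ℝ => u) 1 u := hasDerivAt_id u
      have hb : HasDerivAt (fun u : ℝ => 1 + u ^ 2) (2 * u) u := by
        have := (hasDerivAt_pow 2 u).const_add 1
        simpa using this
      exact ha.div hb hden
    have h2 := ((Real.hasDerivAt_arctan u).add h1).div_const (Real.sqrt (2 * π))
    have h3 := h2.const_add (Real.sqrt (2 * π) / 4)
    refine h3.congr_deriv ?_
    rw [div_eq_div_iff sqrt2pi_pos.ne' sqrt2pi_pos.ne']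
    field_simp
    ring
  have hsub : ∀ u : ℝ, HasDerivAt (fun u => Ifun u - G u) 0 u := by
    intro u
    have := (hasDerivAt_Ifun u).sub (hG u)
    simp only [sub_self] at this
    exact this
  have hconst : Ifun a - G a = Ifun 0 - G 0 := by
    have hdiff : Differentiable ℝ (fun u => Ifun u - G u) :=
      fun u => (hsub u).differentiableAt
    have hz : ∀ u, deriv (fun u => Ifun u - G u) u = 0 := fun u => (hsub u).deriv
    exact (is_const_of_deriv_eq_zero hdiff hz a 0)
  have hI0 : Ifun 0 = Real.sqrt (2 * π) / 4 := by
    unfold Ifun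
    have : ∀ t : ℝ, t ^ 2 * Real.exp (-t ^ 2 / 2) * Phi (0 * t)
        = t ^ 2 * Real.exp (-t ^ 2 / 2) * (1/2) := by
      intro t; rw [zero_mul, Phi_zero]
    rw [setIntegral_congr_fun measurableSet_Ioi fun t _ => this t]
    rw [integral_mul_const, int_sq]
    ring
  have hG0 : G 0 = Real.sqrt (2 * π) / 4 := by
    simp [hGdef, Real.arctan_zero]
  have hIa : Ifun a = G a :=
    sub_eq_zero.1 (hconst.trans (by rw [hI0, hG0, sub_self]))
  rw [hIa]

theorem stmt3 (ρ : ℝ) (h1 : -1 < ρ) (h2 : ρ < 0) :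
    ∫ t in Set.Ioi (0 : ℝ), t ^ 2 * Real.exp (-t ^ 2 / 2) * Phi (ρ * t / Real.sqrt (1 - ρ ^ 2))
      = -(1 / Real.sqrt (2 * Real.pi)) *
          (Real.arctan (Real.sqrt (1 - ρ ^ 2) / ρ) - ρ * Real.sqrt (1 - ρ ^ 2)) := by
  have hρ2 : (0:ℝ) < 1 - ρ ^ 2 := by nlinarith
  set c := Real.sqrt (1 - ρ ^ 2) with hcdef
  have hc : 0 < c := Real.sqrt_pos.2 hρ2
  have hc2 : c ^ 2 = 1 - ρ ^ 2 := Real.sq_sqrt hρ2.le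
  set a := ρ / c with hadef
  have hL : (∫ t in Set.Ioi (0 : ℝ),
      t ^ 2 * Real.exp (-t ^ 2 / 2) * Phi (ρ * t / c)) = Ifun a := by
    unfold Ifun
    refine setIntegral_congr_fun measurableSet_Ioi fun t _ => ?_
    rw [show ρ * t / c = a * t by rw [hadef]; ring]
  rw [hL, Ifun_eq]
  -- arctan identity
  have hcρ : c / ρ < 0 := div_neg_of_pos_of_neg hc h2
  have hinv : a = (c / ρ)⁻¹ := by
    rw [hadef, inv_div]
  have harctan : Real.arctan a = -(π / 2) - Real.arctan (c / ρ) := by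
    rw [hinv]
    exact Real.arctan_inv_of_neg hcρ
  have hfrac : a / (1 + a ^ 2) = ρ * c := by
    rw [hadef]
    have h1a : 1 + (ρ / c) ^ 2 = 1 / c ^ 2 := by
      field_simp
      nlinarith
    rw [h1a]
    field_simp
  rw [harctan, hfrac]
  have hs2 : Real.sqrt 2 * Real.sqrt π * (Real.sqrt 2 * Real.sqrt π) = 2 * π := by
    rw [show Real.sqrt 2 * Real.sqrt π * (Real.sqrt 2 * Real.sqrt π)
        = (Real.sqrt 2 * Real.sqrt 2) * (Real.sqrt π * Real.sqrt π) by ring,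
      Real.mul_self_sqrt (by norm_num), Real.mul_self_sqrt Real.pi_pos.le]
  have hp := sqrt2pi_pos
  field_simp
  linear_combination (2:ℝ) * Real.sq_sqrt (by positivity : (0:ℝ) ≤ 2 * π)
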